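/- arXiv:1205.1154 — 2 statements merged into one kernel-verified Lean document; each statement's English description precedes it below -/
import Mathlib

section
/- For every \(K \ge 0\) and \(x > 0\), \( \int_0^\infty e^{-K^2 t/2} \frac{1}{\sqrt{2\pi t^3}} e^{-x^2/(2t)}\,dt = \frac{1}{x} e^{-Kx} \). -/
open MeasureTheory Real Set

private lemma gauss_integrable : Integrable (fun v : ℝ => Real.exp (-v ^ 2 / 2)) := by
  have h : (fun v : ℝ => Real.exp (-v ^ 2 / 2)) = fun v : ℝ => Real.exp (-(1/2) * v ^ 2) := by
    funext v; ring_nf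
  rw [h]
  exact integrable_exp_neg_mul_sq (by norm_num)

private lemma gauss_total : (∫ v : ℝ, Real.exp (-v ^ 2 / 2)) = Real.sqrt (2 * Real.pi) := by
  have h : (fun v : ℝ => Real.exp (-v ^ 2 / 2)) = fun v : ℝ => Real.exp (-(1/2) * v ^ 2) := by
    funext v; ring_nf
  rw [h, integral_gaussian]
  norm_num [mul_comm]

private lemma gauss_Iio : (∫ v in Iio (0:ℝ), Real.exp (-v ^ 2 / 2)) = Real.sqrt (2 * Real.pi) / 2 := by
  have h1 : (∫ v in Iio (0:ℝ), Real.exp (-v ^ 2 / 2)) = ∫ v in Iic (0:ℝ), Real.exp (-v ^ 2 / 2) :=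
    setIntegral_congr_set Iio_ae_eq_Iic
  have h2 := integral_comp_neg_Ioi (0:ℝ) (fun v => Real.exp (-v ^ 2 / 2))
  simp only [neg_zero] at h2
  have h3 : (∫ v in Ioi (0:ℝ), Real.exp (-(-v) ^ 2 / 2)) = ∫ v in Ioi (0:ℝ), Real.exp (-(1/2) * v ^ 2) := by
    apply setIntegral_congr_fun measurableSet_Ioi
    intro v _; ring_nf
  rw [h1, ← h2, h3, integral_gaussian_Ioi]
  norm_num [mul_comm]

private lemma refl_coeff (K x a F : ℝ) (hK : K ≠ 0) (hx : x ≠ 0) (ha : a ≠ 0) :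
    (x ^ 2 / K ^ 2) / (a ^ 2) ^ 2 * (K / (2 * (x / K / a)) * F) = x / (2 * a ^ 2 * a) * F := by
  field_simp

set_option maxHeartbeats 1600000 in
theorem laplace_transform_hitting_density (K x : ℝ) (hK : 0 ≤ K) (hx : 0 < x) :
    ∫ t in Set.Ioi (0:ℝ),
      Real.exp (-(K ^ 2 * t) / 2) * (1 / Real.sqrt (2 * Real.pi * t ^ 3)) *
        Real.exp (-x ^ 2 / (2 * t)) = (1 / x) * Real.exp (-K * x) := by
  have pi_pos := Real.pi_pos
  obtain ⟨s2p, hs2p⟩ : ∃ _y : ℝ, _y = Real.sqrt (2 * Real.pi) := ⟨_, rfl⟩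
  have hs2p_pos : 0 < s2p := hs2p ▸ Real.sqrt_pos.2 (by positivity)
  obtain ⟨E, hE⟩ : ∃ _y : ℝ → ℝ, _y = fun t => Real.exp (-(K ^ 2 * t) / 2) * Real.exp (-x ^ 2 / (2 * t)) := ⟨_, rfl⟩
  obtain ⟨w, hw⟩ : ∃ _y : ℝ → ℝ, _y = fun t => x / (2 * t * Real.sqrt t) * E t := ⟨_, rfl⟩
  obtain ⟨u, hu⟩ : ∃ _y : ℝ → ℝ, _y = fun t => K / (2 * Real.sqrt t) * E t := ⟨_, rfl⟩
  obtain ⟨φ, hφ⟩ : ∃ _y : ℝ → ℝ, _y = fun t => K * Real.sqrt t - x / Real.sqrt t := ⟨_, rfl⟩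
  obtain ⟨φ', hφ'⟩ : ∃ _y : ℝ → ℝ, _y = fun t => K / (2 * Real.sqrt t) + x / (2 * t * Real.sqrt t) := ⟨_, rfl⟩
  -- derivative
  have hderiv : ∀ t ∈ Ioi (0:ℝ), HasDerivWithinAt φ (φ' t) (Ioi 0) t := by
    intro t ht
    have ht' : (0:ℝ) < t := ht
    have hst : 0 < Real.sqrt t := Real.sqrt_pos.2 ht'
    have h1 : HasDerivAt Real.sqrt (1 / (2 * Real.sqrt t)) t := Real.hasDerivAt_sqrt ht'.ne'
    have h2 : HasDerivAt (fun t => (Real.sqrt t)⁻¹)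
        (-(1 / (2 * Real.sqrt t)) / (Real.sqrt t) ^ 2) t := by
      exact h1.inv hst.ne'
    have h3 : HasDerivAt φ
        (K * (1 / (2 * Real.sqrt t)) - x * (-(1 / (2 * Real.sqrt t)) / (Real.sqrt t) ^ 2)) t := by
      have := (h1.const_mul K).sub (h2.const_mul x)
      simpa [hφ, div_eq_mul_inv, Pi.sub_def] using this
    have heq : K * (1 / (2 * Real.sqrt t)) - x * (-(1 / (2 * Real.sqrt t)) / (Real.sqrt t) ^ 2)
        = φ' t := by
      rw [hφ']
      set a := Real.sqrt t with ha
      have hsq : a ^ 2 = t := Real.sq_sqrt ht'.le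
      have ha0 : a ≠ 0 := (Real.sqrt_pos.2 ht').ne'
      rw [← hsq]
      field_simp
      rw [Real.sqrt_sq hst.le]
      ring
    exact (heq ▸ h3).hasDerivWithinAt
  -- injectivity
  have hmono : StrictMonoOn φ (Ioi (0:ℝ)) := by
    intro a ha b hb hab
    have ha' : (0:ℝ) < a := ha
    have hb' : (0:ℝ) < b := hb
    have hsa : 0 < Real.sqrt a := Real.sqrt_pos.2 ha'
    have hsb : 0 < Real.sqrt b := Real.sqrt_pos.2 hb'
    have hss : Real.sqrt a < Real.sqrt b := Real.sqrt_lt_sqrt ha'.le hab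
    have h1 : K * Real.sqrt a ≤ K * Real.sqrt b := by nlinarith
    have h2 : x / Real.sqrt b < x / Real.sqrt a := by
      apply div_lt_div_of_pos_left hx hsa hss
    simp only [hφ]
    linarith
  have hinj : InjOn φ (Ioi (0:ℝ)) := hmono.injOn
  -- pointwise identity on Ioi 0
  have hpoint : ∀ t ∈ Ioi (0:ℝ),
      |φ' t| • Real.exp (-(φ t) ^ 2 / 2) = Real.exp (K * x) * (u t + w t) := by
    intro t ht
    have ht' : (0:ℝ) < t := ht
    have hst : 0 < Real.sqrt t := Real.sqrt_pos.2 ht'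
    have hsq : (Real.sqrt t) ^ 2 = t := Real.sq_sqrt ht'.le
    have habs : |φ' t| = φ' t := abs_of_nonneg (by simp only [hφ']; positivity)
    have hexp : -(φ t) ^ 2 / 2 = K * x + (-(K ^ 2 * t) / 2 + -x ^ 2 / (2 * t)) := by
      simp only [hφ]
      set a := Real.sqrt t with ha
      have hsq2 : a ^ 2 = t := Real.sq_sqrt ht'.le
      have ha0 : a ≠ 0 := hst.ne'
      rw [← hsq2]
      field_simp
      ring
    rw [smul_eq_mul, habs, hexp, Real.exp_add, Real.exp_add]
    simp only [hu, hw, hE, hφ']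
    ring
  -- change of variables
  have hCoV : (∫ v in φ '' Ioi (0:ℝ), Real.exp (-v ^ 2 / 2))
      = ∫ t in Ioi (0:ℝ), |φ' t| • Real.exp (-(φ t) ^ 2 / 2) :=
    integral_image_eq_integral_abs_deriv_smul measurableSet_Ioi hderiv hinj _
  have hIntSum : IntegrableOn (fun t => |φ' t| • Real.exp (-(φ t) ^ 2 / 2)) (Ioi (0:ℝ)) := by
    exact (integrableOn_image_iff_integrableOn_abs_deriv_smul measurableSet_Ioi hderiv hinj
      (fun v => Real.exp (-v ^ 2 / 2))).1 gauss_integrable.integrableOn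
  -- integrability of u and w
  have hmeasE : Measurable E := by rw [hE]; fun_prop
  have hmeasw : Measurable w := by rw [hw]; fun_prop
  have hmeasu : Measurable u := by rw [hu]; fun_prop
  have hEpos : ∀ t, 0 < E t := fun t => by simp only [hE]; positivity
  have hIntSum' : IntegrableOn (fun t => Real.exp (K * x) * (u t + w t)) (Ioi (0:ℝ)) := by
    apply hIntSum.congr_fun hpoint measurableSet_Ioi
  have hIntSum'' : IntegrableOn (fun t => u t + w t) (Ioi (0:ℝ)) := by
    have := hIntSum'.const_mul (Real.exp (K * x))⁻¹
    simpa [mul_assoc, Real.exp_ne_zero, IntegrableOn] using this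
  have hwle : ∀ t ∈ Ioi (0:ℝ), ‖w t‖ ≤ u t + w t := by
    intro t ht
    have ht' : (0:ℝ) < t := ht
    have hst : 0 < Real.sqrt t := Real.sqrt_pos.2 ht'
    have hw0 : 0 ≤ w t := by
      have := (hEpos t).le; simp only [hw]; positivity
    have hu0 : 0 ≤ u t := by
      have := (hEpos t).le; simp only [hu]; positivity
    rw [Real.norm_eq_abs, abs_of_nonneg hw0]
    linarith
  have hule : ∀ t ∈ Ioi (0:ℝ), ‖u t‖ ≤ u t + w t := by
    intro t ht
    have ht' : (0:ℝ) < t := ht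
    have hst : 0 < Real.sqrt t := Real.sqrt_pos.2 ht'
    have hw0 : 0 ≤ w t := by
      have := (hEpos t).le; simp only [hw]; positivity
    have hu0 : 0 ≤ u t := by
      have := (hEpos t).le; simp only [hu]; positivity
    rw [Real.norm_eq_abs, abs_of_nonneg hu0]
    linarith
  have hIntw : IntegrableOn w (Ioi (0:ℝ)) := by
    apply hIntSum''.mono' hmeasw.aestronglyMeasurable
    exact (ae_restrict_mem measurableSet_Ioi).mono hwle
  have hIntu : IntegrableOn u (Ioi (0:ℝ)) := by
    apply hIntSum''.mono' hmeasu.aestronglyMeasurable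
    exact (ae_restrict_mem measurableSet_Ioi).mono hule
  -- the target integral in terms of w
  have htarget : (∫ t in Set.Ioi (0:ℝ),
      Real.exp (-(K ^ 2 * t) / 2) * (1 / Real.sqrt (2 * Real.pi * t ^ 3)) *
        Real.exp (-x ^ 2 / (2 * t))) = (2 / (x * s2p)) * ∫ t in Ioi (0:ℝ), w t := by
    rw [← integral_const_mul]
    apply setIntegral_congr_fun measurableSet_Ioi
    intro t ht
    have ht' : (0:ℝ) < t := ht
    have hst : 0 < Real.sqrt t := Real.sqrt_pos.2 ht'
    have hcube : Real.sqrt (2 * Real.pi * t ^ 3) = s2p * (t * Real.sqrt t) := by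
      have h1 : Real.sqrt (2 * Real.pi * t ^ 3) = Real.sqrt (2 * Real.pi) * Real.sqrt (t ^ 3) :=
        Real.sqrt_mul (by positivity) _
      have h2 : Real.sqrt (t ^ 3) = t * Real.sqrt t := by
        rw [show t ^ 3 = t ^ 2 * t by ring, Real.sqrt_mul (by positivity) t,
          Real.sqrt_sq ht'.le]
      rw [h1, h2, hs2p]
    simp only [hw, hE, hcube]
    field_simp
  -- values of the Gaussian integrals per case
  have hwval : (∫ t in Ioi (0:ℝ), w t) = s2p * Real.exp (-(K * x)) / 2 := by
    rcases hK.eq_or_lt with hK0 | hK0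
    · -- K = 0
      subst hK0
      have himg : φ '' Ioi (0:ℝ) = Iio (0:ℝ) := by
        ext v
        constructor
        · rintro ⟨t, ht, rfl⟩
          have ht' : (0:ℝ) < t := ht
          have hst : 0 < Real.sqrt t := Real.sqrt_pos.2 ht'
          simp only [hφ, zero_mul, zero_sub, mem_Iio]
          have : 0 < x / Real.sqrt t := by positivity
          linarith
        · intro hv
          have hv' : (v:ℝ) < 0 := hv
          refine ⟨(x / v) ^ 2, ?_, ?_⟩
          · have : x / v ≠ 0 := div_ne_zero hx.ne' hv'.ne
            exact mem_Ioi.2 (by positivity)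
          · have hsq : Real.sqrt ((x / v) ^ 2) = x / (-v) := by
              rw [Real.sqrt_sq_eq_abs, abs_div, abs_of_pos hx, abs_of_neg hv']
            simp only [hφ, hsq, zero_mul, zero_sub]
            have h5 : x / (x / -v) = -v := by
              rw [div_div_eq_mul_div, mul_comm, mul_div_assoc, div_self hx.ne', mul_one]
            rw [h5, neg_neg]
      have huz : ∀ t ∈ Ioi (0:ℝ), u t = 0 := by
        intro t ht; simp [hu]
      have h1 : (∫ t in Ioi (0:ℝ), u t + w t) = ∫ t in Ioi (0:ℝ), w t := by
        apply setIntegral_congr_fun measurableSet_Ioi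
        intro t ht
        show u t + w t = w t
        rw [huz t ht, zero_add]
      have h2 : (∫ t in Ioi (0:ℝ), |φ' t| • Real.exp (-(φ t) ^ 2 / 2))
          = ∫ t in Ioi (0:ℝ), w t := by
        rw [← h1]
        rw [show (∫ t in Ioi (0:ℝ), u t + w t) = ∫ t in Ioi (0:ℝ),
          Real.exp ((0:ℝ) * x) * (u t + w t) by simp]
        exact setIntegral_congr_fun measurableSet_Ioi hpoint
      rw [← h2, ← hCoV, himg, gauss_Iio, hs2p]
      norm_num
    · -- K > 0
      have himg : φ '' Ioi (0:ℝ) = univ := by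
        apply eq_univ_of_forall
        intro v
        obtain ⟨r, hr⟩ : ∃ _y : ℝ, _y = Real.sqrt (v ^ 2 + 4 * K * x) := ⟨_, rfl⟩
        have hr2 : r ^ 2 = v ^ 2 + 4 * K * x := by
          rw [hr]; exact Real.sq_sqrt (by positivity)
        have hr0 : 0 ≤ r := hr ▸ Real.sqrt_nonneg _
        have hrabs : |v| < r := by nlinarith [abs_nonneg v, sq_abs v]
        have hrv : -v < r := lt_of_le_of_lt (neg_le_abs v) hrabs
        obtain ⟨sv, hsv⟩ : ∃ _y : ℝ, _y = (v + r) / (2 * K) := ⟨_, rfl⟩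
        have hsv_pos : 0 < sv := by
          rw [hsv]; apply div_pos (by linarith) (by linarith)
        refine ⟨sv ^ 2, mem_Ioi.2 (by positivity), ?_⟩
        have hK2 : (2:ℝ) * K ≠ 0 := by positivity
        have h2Ks : 2 * K * sv = v + r := by
          rw [hsv, mul_div_cancel₀ _ hK2]
        have h4 : 4 * K * (K * sv ^ 2 - v * sv - x) = 0 := by
          linear_combination (2 * K * sv - v + r) * h2Ks + hr2
        have hroot : K * sv ^ 2 - v * sv - x = 0 := by
          rcases mul_eq_zero.mp h4 with h | h
          · nlinarith
          · exact h
        have hsq : Real.sqrt (sv ^ 2) = sv := Real.sqrt_sq hsv_pos.le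
        simp only [hφ, hsq]
        have hKx : K * sv ^ 2 - x = v * sv := by linarith
        rw [show K * sv - x / sv = (K * sv ^ 2 - x) / sv by field_simp, hKx,
          mul_div_cancel_right₀ v hsv_pos.ne']
      -- reflection: ∫ u = ∫ w
      have hc : (0:ℝ) < x ^ 2 / K ^ 2 := by positivity
      obtain ⟨c, hcdef⟩ : ∃ _y : ℝ, _y = x ^ 2 / K ^ 2 := ⟨_, rfl⟩
      have hc' : 0 < c := by rw [hcdef]; exact hc
      have hrefl_deriv : ∀ t ∈ Ioi (0:ℝ), HasDerivWithinAt (fun t => c / t) (-(c / t ^ 2)) (Ioi 0) t := by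
        intro t ht
        have ht' : (0:ℝ) < t := ht
        have := (hasDerivAt_inv ht'.ne').const_mul c
        have heq : c * -((t:ℝ) ^ 2)⁻¹ = -(c / t ^ 2) := by field_simp
        simpa [div_eq_mul_inv, heq] using this.hasDerivWithinAt
      have hrefl_inj : InjOn (fun t => c / t) (Ioi (0:ℝ)) := by
        intro a ha b hb hab
        have ha' : (0:ℝ) < a := ha
        have hb' : (0:ℝ) < b := hb
        have h' : c * b = c * a := (div_eq_div_iff ha'.ne' hb'.ne').1 hab
        exact (mul_left_cancel₀ hc'.ne' h').symm
      have hrefl_img : (fun t => c / t) '' Ioi (0:ℝ) = Ioi (0:ℝ) := by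
        ext v
        constructor
        · rintro ⟨t, ht, rfl⟩
          have ht' : (0:ℝ) < t := ht
          exact mem_Ioi.2 (div_pos hc' ht')
        · intro hv
          have hv' : (0:ℝ) < v := hv
          refine ⟨c / v, mem_Ioi.2 (div_pos hc' hv'), ?_⟩
          show c / (c / v) = v
          rw [div_div_eq_mul_div, mul_comm, mul_div_assoc, div_self hc'.ne', mul_one]
      have hrefl : (∫ t in Ioi (0:ℝ), u t) = ∫ t in Ioi (0:ℝ), w t := by
        have h0 : (∫ v in (fun t => c / t) '' Ioi (0:ℝ), u v)
            = ∫ t in Ioi (0:ℝ), |(-(c / t ^ 2))| • u (c / t) :=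
          integral_image_eq_integral_abs_deriv_smul measurableSet_Ioi hrefl_deriv hrefl_inj _
        rw [hrefl_img] at h0
        rw [h0]
        apply setIntegral_congr_fun measurableSet_Ioi
        intro t ht
        have ht' : (0:ℝ) < t := ht
        have hst : 0 < Real.sqrt t := Real.sqrt_pos.2 ht'
        show |(-(c / t ^ 2))| • u (c / t) = w t
        have habs : |(-(c / t ^ 2))| = c / t ^ 2 := by
          rw [abs_neg, abs_of_pos (div_pos hc' (by positivity))]
        have hsc : Real.sqrt (x ^ 2 / K ^ 2) = x / K := by
          rw [show x ^ 2 / K ^ 2 = (x / K) ^ 2 by ring, Real.sqrt_sq (by positivity)]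
        have hsct : Real.sqrt (c / t) = (x / K) / Real.sqrt t := by
          rw [hcdef, Real.sqrt_div (by positivity) t, hsc]
        have hE1 : -(K ^ 2 * (c / t)) / 2 = -x ^ 2 / (2 * t) := by
          rw [hcdef]; field_simp
        have hE2 : -x ^ 2 / (2 * (c / t)) = -(K ^ 2 * t) / 2 := by
          rw [hcdef]; field_simp
        have hEct : E (c / t) = E t := by
          simp only [hE, hE1, hE2]; ring
        rw [smul_eq_mul, habs]
        simp only [hu, hw, hEct, hsct]
        obtain ⟨a, haa⟩ : ∃ _y : ℝ, _y = Real.sqrt t := ⟨_, rfl⟩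
        have ha0 : a ≠ 0 := by rw [haa]; exact hst.ne'
        have hat : t = a ^ 2 := by rw [haa, Real.sq_sqrt ht'.le]
        rw [← haa, hcdef, hat]
        exact refl_coeff K x a (E (a ^ 2)) hK0.ne' hx.ne' ha0
      -- assemble
      have h2 : s2p = Real.exp (K * x) * ((∫ t in Ioi (0:ℝ), u t) + ∫ t in Ioi (0:ℝ), w t) := by
        have hsum : (∫ t in Ioi (0:ℝ), u t + w t)
            = (∫ t in Ioi (0:ℝ), u t) + ∫ t in Ioi (0:ℝ), w t :=
          integral_add hIntu hIntw
        calc s2p = ∫ v in φ '' Ioi (0:ℝ), Real.exp (-v ^ 2 / 2) := by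
              rw [himg, setIntegral_univ, hs2p]; exact gauss_total.symm
          _ = ∫ t in Ioi (0:ℝ), |φ' t| • Real.exp (-(φ t) ^ 2 / 2) := hCoV
          _ = ∫ t in Ioi (0:ℝ), Real.exp (K * x) * (u t + w t) :=
              setIntegral_congr_fun measurableSet_Ioi hpoint
          _ = Real.exp (K * x) * ∫ t in Ioi (0:ℝ), u t + w t := integral_const_mul _ _
          _ = _ := by rw [hsum]
      rw [hrefl] at h2
      have he : Real.exp (K * x) ≠ 0 := (Real.exp_pos _).ne'
      rw [h2, Real.exp_neg]
      linear_combination (-(∫ t in Ioi (0:ℝ), w t)) * mul_inv_cancel₀ he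
  rw [htarget, hwval]
  have hs2p0 : s2p ≠ 0 := hs2p_pos.ne'
  have hx0 : x ≠ 0 := hx.ne'
  rw [show -K * x = -(K * x) by ring]
  field_simp
end

section
/- For every \(K \ge 0\) and \(x > 0\), \( \int_0^\infty \frac{e^{-K^2 t/2}}{t} \cdot \frac{x}{\sqrt{2\pi t^3}} e^{-x^2/(2t)}\,dt = \frac{1 + Kx}{x^2} e^{-Kx} \). -/
open MeasureTheory Real Set Filter Topology

noncomputable def Phi (y : ℝ) : ℝ := ∫ s in (0:ℝ)..y, Real.exp (-s^2)

lemma expsq_cont : Continuous fun s : ℝ => Real.exp (-s^2) := by continuity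

lemma Phi_hasDeriv (y : ℝ) : HasDerivAt Phi (Real.exp (-y^2)) y := by
  refine intervalIntegral.integral_hasDerivAt_right ?_ ?_ expsq_cont.continuousAt
  · exact expsq_cont.intervalIntegrable _ _
  · exact expsq_cont.stronglyMeasurableAtFilter _ _

lemma expsq_integrableOn : IntegrableOn (fun s : ℝ => Real.exp (-s^2)) (Ioi 0) := by
  have := (integrable_exp_neg_mul_sq (b := 1) one_pos).integrableOn (s := Ioi (0:ℝ))
  simpa using this

lemma Phi_atTop : Tendsto Phi atTop (𝓝 (Real.sqrt π / 2)) := by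
  have h := intervalIntegral_tendsto_integral_Ioi (0:ℝ) expsq_integrableOn tendsto_id
  have h2 : ∫ s in Ioi (0:ℝ), Real.exp (-s^2) = Real.sqrt π / 2 := by
    have := integral_gaussian_Ioi 1
    simpa using this
  rw [h2] at h
  exact h

lemma Phi_neg (y : ℝ) : Phi (-y) = - Phi y := by
  unfold Phi
  rw [← intervalIntegral.integral_symm]
  have h := intervalIntegral.integral_comp_neg (a := y) (b := (0:ℝ)) (fun s => Real.exp (-s^2))
  simp only [neg_zero] at h
  rw [← h]
  refine intervalIntegral.integral_congr fun s _ => by ring_nf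

lemma Phi_atBot : Tendsto Phi atBot (𝓝 (-(Real.sqrt π / 2))) := by
  have : Tendsto (fun y => - Phi (-y)) atBot (𝓝 (-(Real.sqrt π / 2))) :=
    (Phi_atTop.comp tendsto_neg_atBot_atTop).neg
  refine this.congr fun y => by rw [← Phi_neg]; ring_nf

lemma Phi_zero : Phi 0 = 0 := intervalIntegral.integral_same

lemma sqrt_tendsto_atTop' : Tendsto Real.sqrt atTop atTop := by
  refine tendsto_atTop_mono' _ ?_ (tendsto_rpow_atTop (y := (1/2:ℝ)) (by norm_num))
  filter_upwards [eventually_ge_atTop (0:ℝ)] with u hu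
  rw [Real.sqrt_eq_rpow]

lemma hasDeriv_F (a b t : ℝ) (ha : 0 < a) (ht : 0 < t) :
    HasDerivAt (fun u => Real.exp (-(a^2/u) - b^2*u) / Real.sqrt u
      + Real.exp (2*a*b)*(b - 1/(2*a)) * Phi (a/Real.sqrt u + b*Real.sqrt u)
      + Real.exp (-(2*a*b))*(-b - 1/(2*a)) * Phi (a/Real.sqrt u - b*Real.sqrt u))
    (a^2/(t^2*Real.sqrt t) * Real.exp (-(a^2/t) - b^2*t)) t := by
  have hst : 0 < Real.sqrt t := Real.sqrt_pos.2 ht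
  have hsne : Real.sqrt t ≠ 0 := hst.ne'
  have d_sqrt : HasDerivAt Real.sqrt (1/(2*Real.sqrt t)) t := hasDerivAt_sqrt ht.ne'
  have d_inv : HasDerivAt (fun u : ℝ => a^2/u) (-(a^2/t^2)) t := by
    have := (hasDerivAt_inv ht.ne').const_mul (a^2)
    simpa [div_eq_mul_inv, mul_comm] using this
  have dE : HasDerivAt (fun u : ℝ => -(a^2/u) - b^2*u) (a^2/t^2 - b^2) t := by
    have := (d_inv.fun_neg).fun_sub ((hasDerivAt_id t).const_mul (b^2))
    simpa using this
  have dexpE : HasDerivAt (fun u : ℝ => Real.exp (-(a^2/u) - b^2*u))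
      (Real.exp (-(a^2/t) - b^2*t) * (a^2/t^2 - b^2)) t := dE.exp
  have d_term1 : HasDerivAt (fun u : ℝ => Real.exp (-(a^2/u) - b^2*u) / Real.sqrt u)
      ((Real.exp (-(a^2/t) - b^2*t) * (a^2/t^2 - b^2) * Real.sqrt t
        - Real.exp (-(a^2/t) - b^2*t) * (1/(2*Real.sqrt t))) / Real.sqrt t ^ 2) t :=
    dexpE.div d_sqrt hsne
  have d_adiv : HasDerivAt (fun u : ℝ => a / Real.sqrt u)
      ((0 * Real.sqrt t - a * (1/(2*Real.sqrt t))) / Real.sqrt t ^ 2) t :=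
    (hasDerivAt_const t a).div d_sqrt hsne
  have d_bs : HasDerivAt (fun u : ℝ => b * Real.sqrt u) (b * (1/(2*Real.sqrt t))) t :=
    d_sqrt.const_mul b
  have d_argp : HasDerivAt (fun u : ℝ => a / Real.sqrt u + b * Real.sqrt u)
      ((0 * Real.sqrt t - a * (1/(2*Real.sqrt t))) / Real.sqrt t ^ 2 + b * (1/(2*Real.sqrt t))) t :=
    d_adiv.add d_bs
  have d_argm : HasDerivAt (fun u : ℝ => a / Real.sqrt u - b * Real.sqrt u)
      ((0 * Real.sqrt t - a * (1/(2*Real.sqrt t))) / Real.sqrt t ^ 2 - b * (1/(2*Real.sqrt t))) t :=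
    d_adiv.sub d_bs
  have d_phip : HasDerivAt (fun u : ℝ => Phi (a/Real.sqrt u + b*Real.sqrt u))
      (Real.exp (-(a/Real.sqrt t + b*Real.sqrt t)^2) *
        ((0 * Real.sqrt t - a * (1/(2*Real.sqrt t))) / Real.sqrt t ^ 2 + b * (1/(2*Real.sqrt t)))) t :=
    (Phi_hasDeriv _).comp t d_argp
  have d_phim : HasDerivAt (fun u : ℝ => Phi (a/Real.sqrt u - b*Real.sqrt u))
      (Real.exp (-(a/Real.sqrt t - b*Real.sqrt t)^2) *
        ((0 * Real.sqrt t - a * (1/(2*Real.sqrt t))) / Real.sqrt t ^ 2 - b * (1/(2*Real.sqrt t)))) t :=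
    (Phi_hasDeriv _).comp t d_argm
  have total := (d_term1.add (d_phip.const_mul (Real.exp (2*a*b)*(b - 1/(2*a))))).add
    (d_phim.const_mul (Real.exp (-(2*a*b))*(-b - 1/(2*a))))
  refine total.congr_deriv ?_
  set s := Real.sqrt t with hsdef
  have hs2 : s^2 = t := Real.sq_sqrt ht.le
  have e1 : Real.exp (-(a/s + b*s)^2) = Real.exp (-(2*a*b)) * Real.exp (-(a^2/t) - b^2*t) := by
    rw [← Real.exp_add]; congr 1; rw [← hs2]; field_simp; ring
  have e2 : Real.exp (-(a/s - b*s)^2) = Real.exp (2*a*b) * Real.exp (-(a^2/t) - b^2*t) := by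
    rw [← Real.exp_add]; congr 1; rw [← hs2]; field_simp; ring
  rw [e1, e2, Real.exp_neg]
  have hexne : Real.exp (2*a*b) ≠ 0 := (Real.exp_pos _).ne'
  rw [← hs2]
  field_simp
  ring

lemma tendsto_adiv_sqrt_zero (a : ℝ) : Tendsto (fun u : ℝ => a / Real.sqrt u) atTop (𝓝 0) := by
  have := (sqrt_tendsto_atTop'.inv_tendsto_atTop).const_mul a
  rw [mul_zero] at this
  exact this.congr fun u => (div_eq_mul_inv a _).symm

lemma F_atTop (a b : ℝ) (ha : 0 < a) (hb : 0 ≤ b) :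
    Tendsto (fun u => Real.exp (-(a^2/u) - b^2*u) / Real.sqrt u
      + Real.exp (2*a*b)*(b - 1/(2*a)) * Phi (a/Real.sqrt u + b*Real.sqrt u)
      + Real.exp (-(2*a*b))*(-b - 1/(2*a)) * Phi (a/Real.sqrt u - b*Real.sqrt u)) atTop
      (𝓝 ((Real.exp (2*a*b)*(b - 1/(2*a)) - Real.exp (-(2*a*b))*(-b - 1/(2*a))) * (Real.sqrt π / 2))) := by
  have h0 : Tendsto (fun u : ℝ => Real.exp (-(a^2/u) - b^2*u) / Real.sqrt u) atTop (𝓝 0) := by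
    refine tendsto_of_tendsto_of_tendsto_of_le_of_le' tendsto_const_nhds
      sqrt_tendsto_atTop'.inv_tendsto_atTop ?_ ?_
    · filter_upwards [eventually_gt_atTop (0:ℝ)] with u hu
      positivity
    · filter_upwards [eventually_gt_atTop (0:ℝ)] with u hu
      rw [div_eq_mul_inv]
      have h1 : Real.exp (-(a^2/u) - b^2*u) ≤ 1 := by
        rw [Real.exp_le_one_iff]
        have : 0 ≤ a^2/u := by positivity
        nlinarith [sq_nonneg b]
      have h2 : (0:ℝ) ≤ (Real.sqrt u)⁻¹ := by positivity
      simp only [Pi.inv_apply]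
      nlinarith
  rcases hb.eq_or_lt with rfl | hb'
  · have harg : Tendsto (fun u : ℝ => a / Real.sqrt u + 0 * Real.sqrt u) atTop (𝓝 0) := by
      have := (tendsto_adiv_sqrt_zero a).add (tendsto_const_nhds (x := (0:ℝ)))
      rw [add_zero] at this
      exact this.congr fun u => by ring
    have hargm : Tendsto (fun u : ℝ => a / Real.sqrt u - 0 * Real.sqrt u) atTop (𝓝 0) := by
      have := (tendsto_adiv_sqrt_zero a).sub (tendsto_const_nhds (x := (0:ℝ)))
      rw [sub_zero] at this
      exact this.congr fun u => by ring
    have hPhiCont : Tendsto Phi (𝓝 0) (𝓝 0) := by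
      have := (Phi_hasDeriv 0).continuousAt.tendsto
      rwa [Phi_zero] at this
    have hp := hPhiCont.comp harg
    have hm := hPhiCont.comp hargm
    have total := (h0.add (hp.const_mul (Real.exp (2*a*0)*(0 - 1/(2*a))))).add
      (hm.const_mul (Real.exp (-(2*a*0))*(-0 - 1/(2*a))))
    convert total using 2
    · rfl
    ring
  · have hbs : Tendsto (fun u : ℝ => b * Real.sqrt u) atTop atTop :=
      sqrt_tendsto_atTop'.const_mul_atTop hb'
    have hargp : Tendsto (fun u : ℝ => a / Real.sqrt u + b * Real.sqrt u) atTop atTop :=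
      (tendsto_adiv_sqrt_zero a).add_atTop hbs
    have hargm : Tendsto (fun u : ℝ => a / Real.sqrt u - b * Real.sqrt u) atTop atBot := by
      have := (tendsto_adiv_sqrt_zero a).add_atBot (tendsto_neg_atTop_atBot.comp hbs)
      exact this.congr fun u => by simp [sub_eq_add_neg]
    have hp := Phi_atTop.comp hargp
    have hm := Phi_atBot.comp hargm
    have total := (h0.add (hp.const_mul (Real.exp (2*a*b)*(b - 1/(2*a))))).add
      (hm.const_mul (Real.exp (-(2*a*b))*(-b - 1/(2*a))))
    convert total using 2
    · rfl
    ring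

lemma F_zero_right (a b : ℝ) (ha : 0 < a) (hb : 0 ≤ b) :
    Tendsto (fun u => Real.exp (-(a^2/u) - b^2*u) / Real.sqrt u
      + Real.exp (2*a*b)*(b - 1/(2*a)) * Phi (a/Real.sqrt u + b*Real.sqrt u)
      + Real.exp (-(2*a*b))*(-b - 1/(2*a)) * Phi (a/Real.sqrt u - b*Real.sqrt u)) (𝓝[>] (0:ℝ))
      (𝓝 ((Real.exp (2*a*b)*(b - 1/(2*a)) + Real.exp (-(2*a*b))*(-b - 1/(2*a))) * (Real.sqrt π / 2))) := by
  have hinv : Tendsto (fun t : ℝ => t⁻¹) (𝓝[>] (0:ℝ)) atTop := tendsto_inv_nhdsGT_zero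
  have hsq_inv : Tendsto (fun t : ℝ => (Real.sqrt t)⁻¹) (𝓝[>] (0:ℝ)) atTop :=
    (sqrt_tendsto_atTop'.comp hinv).congr fun t => Real.sqrt_inv t
  have hsqrt0 : Tendsto (fun t : ℝ => b * Real.sqrt t) (𝓝[>] (0:ℝ)) (𝓝 0) := by
    have h1 : Tendsto Real.sqrt (𝓝 0) (𝓝 0) := by
      have := Real.continuous_sqrt.tendsto 0
      rwa [Real.sqrt_zero] at this
    have h2 : Tendsto Real.sqrt (𝓝[>] (0:ℝ)) (𝓝 0) := h1.mono_left nhdsWithin_le_nhds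
    have h3 := h2.const_mul b
    rw [mul_zero] at h3
    exact h3
  have hadiv : Tendsto (fun t : ℝ => a / Real.sqrt t) (𝓝[>] (0:ℝ)) atTop := by
    have := hsq_inv.const_mul_atTop ha
    exact this.congr fun t => (div_eq_mul_inv a _).symm
  have hargp : Tendsto (fun t : ℝ => a / Real.sqrt t + b * Real.sqrt t) (𝓝[>] (0:ℝ)) atTop :=
    hadiv.atTop_add hsqrt0
  have hargm : Tendsto (fun t : ℝ => a / Real.sqrt t - b * Real.sqrt t) (𝓝[>] (0:ℝ)) atTop := by
    have := hadiv.atTop_add hsqrt0.neg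
    exact this.congr fun t => by ring
  have hp := Phi_atTop.comp hargp
  have hm := Phi_atTop.comp hargm
  have hterm1 : Tendsto (fun t : ℝ => Real.exp (-(a^2/t) - b^2*t) / Real.sqrt t)
      (𝓝[>] (0:ℝ)) (𝓝 0) := by
    have hg : Tendsto (fun u : ℝ => Real.sqrt u * Real.exp (-(a^2*u))) atTop (𝓝 0) := by
      have h := tendsto_rpow_mul_exp_neg_mul_atTop_nhds_zero (1/2) (a^2) (by positivity)
      refine h.congr' ?_
      filter_upwards [eventually_ge_atTop (0:ℝ)] with u hu
      rw [Real.sqrt_eq_rpow, neg_mul]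
    have hcomp := hg.comp hinv
    have hexpb : Tendsto (fun t : ℝ => Real.exp (-(b^2*t))) (𝓝[>] (0:ℝ)) (𝓝 1) := by
      have : Tendsto (fun t : ℝ => Real.exp (-(b^2*t))) (𝓝 0) (𝓝 1) := by
        have hc : Continuous fun t : ℝ => Real.exp (-(b^2*t)) := by continuity
        have := hc.tendsto 0
        simpa using this
      exact this.mono_left nhdsWithin_le_nhds
    have := hcomp.mul hexpb
    rw [zero_mul] at this
    refine this.congr' ?_
    filter_upwards [self_mem_nhdsWithin] with t (ht : 0 < t)
    show Real.sqrt t⁻¹ * Real.exp (-(a^2 * t⁻¹)) * Real.exp (-(b^2*t)) = _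
    have harg : -(a^2 * t⁻¹) + -(b^2*t) = -(a^2/t) - b^2*t := by
      rw [div_eq_mul_inv]; ring
    rw [Real.sqrt_inv, mul_assoc, ← Real.exp_add, harg, div_eq_mul_inv]
    ring
  have total := (hterm1.add (hp.const_mul (Real.exp (2*a*b)*(b - 1/(2*a))))).add
    (hm.const_mul (Real.exp (-(2*a*b))*(-b - 1/(2*a))))
  convert total using 2
  · rfl
  ring

noncomputable def Gfun (a b : ℝ) : ℝ → ℝ := fun t =>
  if t ≤ 0 then
    (Real.exp (2*a*b)*(b - 1/(2*a)) + Real.exp (-(2*a*b))*(-b - 1/(2*a))) * (Real.sqrt π / 2)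
  else Real.exp (-(a^2/t) - b^2*t) / Real.sqrt t
    + Real.exp (2*a*b)*(b - 1/(2*a)) * Phi (a/Real.sqrt t + b*Real.sqrt t)
    + Real.exp (-(2*a*b))*(-b - 1/(2*a)) * Phi (a/Real.sqrt t - b*Real.sqrt t)

lemma aux_integral (a b : ℝ) (ha : 0 < a) (hb : 0 ≤ b) :
    ∫ t in Ioi (0:ℝ), a^2/(t^2*Real.sqrt t) * Real.exp (-(a^2/t) - b^2*t)
      = Real.sqrt π * Real.exp (-(2*a*b)) * (b + 1/(2*a)) := by
  have heqF : ∀ t ∈ Ioi (0:ℝ), Gfun a b t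
      = Real.exp (-(a^2/t) - b^2*t) / Real.sqrt t
        + Real.exp (2*a*b)*(b - 1/(2*a)) * Phi (a/Real.sqrt t + b*Real.sqrt t)
        + Real.exp (-(2*a*b))*(-b - 1/(2*a)) * Phi (a/Real.sqrt t - b*Real.sqrt t) :=
    fun t ht => if_neg (not_le.2 ht)
  have hderiv : ∀ t ∈ Ioi (0:ℝ), HasDerivAt (Gfun a b)
      (a^2/(t^2*Real.sqrt t) * Real.exp (-(a^2/t) - b^2*t)) t := by
    intro t ht
    refine (hasDeriv_F a b t ha ht).congr_of_eventuallyEq ?_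
    filter_upwards [Ioi_mem_nhds ht] with u hu
    exact heqF u hu
  have hpos : ∀ t ∈ Ioi (0:ℝ), 0 ≤ a^2/(t^2*Real.sqrt t) * Real.exp (-(a^2/t) - b^2*t) := by
    intro t ht
    positivity
  have hcont : ContinuousWithinAt (Gfun a b) (Ici 0) 0 := by
    rw [← Ioi_insert, continuousWithinAt_insert_self]
    have hG0 : Gfun a b 0
        = (Real.exp (2*a*b)*(b - 1/(2*a)) + Real.exp (-(2*a*b))*(-b - 1/(2*a)))
          * (Real.sqrt π / 2) := if_pos le_rfl
    unfold ContinuousWithinAt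
    rw [hG0]
    refine (F_zero_right a b ha hb).congr' ?_
    filter_upwards [self_mem_nhdsWithin] with t (ht : 0 < t)
    exact (heqF t ht).symm
  have htop : Tendsto (Gfun a b) atTop
      (𝓝 ((Real.exp (2*a*b)*(b - 1/(2*a)) - Real.exp (-(2*a*b))*(-b - 1/(2*a)))
        * (Real.sqrt π / 2))) := by
    refine (F_atTop a b ha hb).congr' ?_
    filter_upwards [Ioi_mem_atTop (0:ℝ)] with t ht
    exact (heqF t ht).symm
  have key := integral_Ioi_of_hasDerivAt_of_nonneg hcont hderiv hpos htop
  rw [key]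
  have hG0 : Gfun a b 0
      = (Real.exp (2*a*b)*(b - 1/(2*a)) + Real.exp (-(2*a*b))*(-b - 1/(2*a)))
        * (Real.sqrt π / 2) := if_pos le_rfl
  rw [hG0]
  ring

theorem weighted_laplace_transform_hitting_density (K x : ℝ) (hK : 0 ≤ K) (hx : 0 < x) :
    ∫ t in Set.Ioi (0:ℝ),
      Real.exp (-(K ^ 2 * t) / 2) / t *
        (x / Real.sqrt (2 * Real.pi * t ^ 3) * Real.exp (-x ^ 2 / (2 * t)))
      = (1 + K * x) / x ^ 2 * Real.exp (-K * x) := by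
  have ha : 0 < x / Real.sqrt 2 := by positivity
  have hb : 0 ≤ K / Real.sqrt 2 := by positivity
  have key := aux_integral (x / Real.sqrt 2) (K / Real.sqrt 2) ha hb
  have h2 : Real.sqrt 2 ^ 2 = 2 := Real.sq_sqrt (by norm_num)
  have h2pos : (0:ℝ) < Real.sqrt 2 := by positivity
  have hπ : (0:ℝ) < Real.sqrt π := Real.sqrt_pos.2 Real.pi_pos
  have hcongr : ∀ t ∈ Ioi (0:ℝ),
      Real.exp (-(K ^ 2 * t) / 2) / t *
        (x / Real.sqrt (2 * Real.pi * t ^ 3) * Real.exp (-x ^ 2 / (2 * t)))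
      = (2 / (x * Real.sqrt (2*π))) *
        ((x / Real.sqrt 2)^2/(t^2*Real.sqrt t) *
          Real.exp (-((x / Real.sqrt 2)^2/t) - (K / Real.sqrt 2)^2*t)) := by
    intro t ht
    have ht' : 0 < t := ht
    have hst : 0 < Real.sqrt t := Real.sqrt_pos.2 ht'
    have hsplit : Real.sqrt (2 * Real.pi * t ^ 3) = Real.sqrt (2*π) * (t * Real.sqrt t) := by
      rw [show 2 * Real.pi * t ^ 3 = (2*π) * (t^3) by ring, Real.sqrt_mul (by positivity)]
      congr 1
      rw [show t^3 = t^2 * t by ring, Real.sqrt_mul (by positivity), Real.sqrt_sq ht'.le]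
    have hexp : Real.exp (-((x / Real.sqrt 2)^2/t) - (K / Real.sqrt 2)^2*t)
        = Real.exp (-(K ^ 2 * t) / 2) * Real.exp (-x ^ 2 / (2 * t)) := by
      rw [← Real.exp_add]
      congr 1
      rw [div_pow, div_pow, h2]
      field_simp
      ring
    rw [hexp, hsplit]
    have h2π : Real.sqrt (2*π) > 0 := Real.sqrt_pos.2 (by positivity)
    field_simp
    ring
    exact h2
  rw [setIntegral_congr_fun measurableSet_Ioi hcongr, MeasureTheory.integral_const_mul, key]
  have h22 : Real.sqrt 2 * Real.sqrt 2 = 2 := Real.mul_self_sqrt (by norm_num)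
  have hexp2 : Real.exp (-(2 * (x / Real.sqrt 2) * (K / Real.sqrt 2))) = Real.exp (-K * x) := by
    congr 1
    rw [mul_assoc, div_mul_div_comm, h22]
    ring
  rw [hexp2]
  have hsqrt2π : Real.sqrt (2*π) = Real.sqrt 2 * Real.sqrt π :=
    Real.sqrt_mul (by norm_num) _
  rw [hsqrt2π]
  field_simp
  linear_combination (-(x * K)) * h2
end
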